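/- Let n ≥ 3 and let S be a set of transpositions generating S_n such that the Cayley graph Cay(S_n, S) is normal. Then every graph automorphism g of Cay(S_n, S) can be written uniquely in the form g : x ↦ b⁻¹ * x * a for some a ∈ S_n and some b ∈ Aut(T(S)); that is, Aut(Cay(S_n, S)) is the internal product of the image R(S_n) of the right regular representation and the subgroup λ(Aut(T(S))) = { x ↦ b⁻¹ * x : b ∈ Aut(T(S)) }, and these two subgroups intersect trivially. -/

import Mathlib

open Equiv

/-- The Cayley graph of `Sₙ = Perm (Fin n)` with connection set `S`:
vertices `h, g` are adjacent iff `g * h⁻¹ ∈ S` (for a symmetric identity-free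
set `S`, such as a set of transpositions, `fromRel` yields exactly this relation). -/
def Cay (n : ℕ) (S : Set (Equiv.Perm (Fin n))) : SimpleGraph (Equiv.Perm (Fin n)) :=
  SimpleGraph.fromRel (fun h g => g * h⁻¹ ∈ S)

/-- The transposition graph `T(S)` of `S`: vertices `i, j ∈ Fin n` are adjacent
iff the transposition `swap i j ∈ S`. -/
def TransGraph (n : ℕ) (S : Set (Equiv.Perm (Fin n))) : SimpleGraph (Fin n) :=
  SimpleGraph.fromRel (fun i j => Equiv.swap i j ∈ S)

/-- The automorphism group of a graph, as a subgroup of the symmetric group on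
its vertex set. -/
def graphAut {V : Type*} (G : SimpleGraph V) : Subgroup (Equiv.Perm V) where
  carrier := {f | ∀ x y, G.Adj (f x) (f y) ↔ G.Adj x y}
  one_mem' := by intro x y; simp
  mul_mem' := by
    intro a b ha hb x y
    simp only [Equiv.Perm.mul_apply]
    rw [ha, hb]
  inv_mem' := by
    intro a ha x y
    rw [← ha (a⁻¹ x) (a⁻¹ y)]
    simp

/-- The image `R(Sₙ)` of the right regular representation of `Sₙ` inside `Sym(Sₙ)`:
all permutations of the form `x ↦ x * a`. -/
def Rrep (n : ℕ) : Subgroup (Equiv.Perm (Equiv.Perm (Fin n))) where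
  carrier := {f | ∃ a : Equiv.Perm (Fin n), f = Equiv.mulRight a}
  one_mem' := ⟨1, by ext x; simp⟩
  mul_mem' := by
    rintro _ _ ⟨a, rfl⟩ ⟨b, rfl⟩
    exact ⟨b * a, by ext x; simp [mul_assoc]⟩
  inv_mem' := by
    rintro _ ⟨a, rfl⟩
    exact ⟨a⁻¹, by ext x; simp⟩

/-- The image `λ(Sₙ)` of the left regular representation of `Sₙ` inside `Sym(Sₙ)`:
all permutations of the form `x ↦ b⁻¹ * x`. -/
def LrepAll (n : ℕ) : Subgroup (Equiv.Perm (Equiv.Perm (Fin n))) where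
  carrier := {f | ∃ b : Equiv.Perm (Fin n), f = Equiv.mulLeft b⁻¹}
  one_mem' := ⟨1, by ext x; simp⟩
  mul_mem' := by
    rintro _ _ ⟨a, rfl⟩ ⟨b, rfl⟩
    exact ⟨b * a, by ext x; simp [mul_assoc]⟩
  inv_mem' := by
    rintro _ ⟨a, rfl⟩
    exact ⟨a⁻¹, by ext x; simp⟩

/-- The subgroup `λ(Aut(T(S))) = { x ↦ a⁻¹ * x : a ∈ Aut(T(S)) }` of `Sym(Sₙ)`. -/
def Lrep (n : ℕ) (S : Set (Equiv.Perm (Fin n))) :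
    Subgroup (Equiv.Perm (Equiv.Perm (Fin n))) where
  carrier := {f | ∃ a ∈ graphAut (TransGraph n S), f = Equiv.mulLeft a⁻¹}
  one_mem' := ⟨1, one_mem _, by ext x; simp⟩
  mul_mem' := by
    rintro _ _ ⟨a, ha, rfl⟩ ⟨b, hb, rfl⟩
    exact ⟨b * a, mul_mem hb ha, by ext x; simp [mul_assoc]⟩
  inv_mem' := by
    rintro _ ⟨a, ha, rfl⟩
    exact ⟨a⁻¹, inv_mem ha, by ext x; simp⟩

theorem Equiv.Perm.apply_inv_self {α : Type*} (f : Perm α) (x : α) : f (f⁻¹ x) = x :=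
  f.apply_symm_apply x

theorem Equiv.Perm.inv_apply_self {α : Type*} (f : Perm α) (x : α) : f⁻¹ (f x) = x :=
  f.symm_apply_apply x


lemma swap_moves_iff {x y i : Fin n} (hxy : x ≠ y) :
    Equiv.swap x y i ≠ i ↔ i = x ∨ i = y := by
  constructor
  · intro h; by_contra hc; push_neg at hc
    exact h (Equiv.swap_apply_of_ne_of_ne hc.1 hc.2)
  · rintro (rfl | rfl)
    · simp [Equiv.swap_apply_left, hxy.symm]
    · simp [Equiv.swap_apply_right, hxy]

lemma swap_of_moves {s : Perm (Fin n)} (hs : s.IsSwap) {p : Fin n} (hp : s p ≠ p) :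
    s = Equiv.swap p (s p) := by
  obtain ⟨x, y, hxy, rfl⟩ := hs
  rcases (swap_moves_iff hxy).1 hp with rfl | rfl
  · rw [Equiv.swap_apply_left]
  · rw [Equiv.swap_apply_right, Equiv.swap_comm]

lemma moves_or {s : Perm (Fin n)} (hs : s.IsSwap) {p q : Fin n} (hp : s p ≠ p)
    (hq : s q ≠ q) : q = p ∨ q = s p := by
  have h1 := swap_of_moves hs hp
  have : s p ≠ p := hp
  rw [h1] at hq
  exact (swap_moves_iff (Ne.symm hp)).1 hq

lemma eq_swap_of_two_moves {s : Perm (Fin n)} (hs : s.IsSwap) {p q : Fin n}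
    (hp : s p ≠ p) (hq : s q ≠ q) (hpq : p ≠ q) : s = Equiv.swap p q := by
  rcases moves_or hs hp hq with h | h
  · exact absurd h.symm hpq
  · rw [swap_of_moves hs hp, h]

lemma isSwap_ne_one {s : Perm (Fin n)} (hs : s.IsSwap) : s ≠ 1 := by
  obtain ⟨x, y, hxy, rfl⟩ := hs
  intro h
  have := congrArg (fun f : Perm (Fin n) => f x) h
  simp [Equiv.swap_apply_left] at this
  exact hxy this.symm

lemma isSwap_inv {s : Perm (Fin n)} (hs : s.IsSwap) : s⁻¹ = s := by
  obtain ⟨x, y, _, rfl⟩ := hs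
  exact Equiv.swap_inv x y

lemma isSwap_apply_apply {s : Perm (Fin n)} (hs : s.IsSwap) (x : Fin n) : s (s x) = x := by
  obtain ⟨a, b, hab, rfl⟩ := hs
  exact Equiv.swap_apply_self a b x

lemma swaps_not_commute {t1 t2 : Perm (Fin n)} (h1 : t1.IsSwap) (h2 : t2.IsSwap)
    (hne : t1 ≠ t2) {i : Fin n} (m1 : t1 i ≠ i) (m2 : t2 i ≠ i) :
    t1 * t2 ≠ t2 * t1 := by
  have hx : t1 i ≠ t2 i := by
    intro h
    apply hne
    rw [swap_of_moves h1 m1, swap_of_moves h2 m2, h]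
  intro h
  have happ := congrArg (fun f : Perm (Fin n) => f i) h
  simp only [Perm.mul_apply] at happ
  -- t1 (t2 i) = t2 (t1 i)
  have e1 : t1 (t2 i) = t2 i := by
    rw [swap_of_moves h1 m1]
    exact Equiv.swap_apply_of_ne_of_ne m2 (Ne.symm hx)
  have e2 : t2 (t1 i) = t1 i := by
    rw [swap_of_moves h2 m2]
    exact Equiv.swap_apply_of_ne_of_ne m1 hx
  rw [e1, e2] at happ
  exact hx (happ.symm)

lemma exists_third (hn : 3 ≤ n) (i j : Fin n) : ∃ k : Fin n, k ≠ i ∧ k ≠ j := by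
  by_contra hc
  push_neg at hc
  have hsub : (Finset.univ : Finset (Fin n)) ⊆ {i, j} := by
    intro k _
    rcases Classical.em (k = i) with h | h
    · simp [h]
    · simp [hc k h]
  have := Finset.card_le_card hsub
  simp only [Finset.card_univ, Fintype.card_fin] at this
  have h2 : ({i, j} : Finset (Fin n)).card ≤ 2 :=
    (Finset.card_insert_le _ _).trans (by simp)
  omega

lemma central_eq_one (hn : 3 ≤ n) {a : Perm (Fin n)} (h : ∀ x : Perm (Fin n), a * x = x * a) :
    a = 1 := by
  by_contra ha
  obtain ⟨x, hx⟩ : ∃ x, a x ≠ x := by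
    by_contra hc
    push_neg at hc
    exact ha (Equiv.ext hc)
  obtain ⟨y, hy1, hy2⟩ := exists_third hn x (a x)
  have := congrArg (fun f : Perm (Fin n) => f x) (h (Equiv.swap x y))
  simp only [Perm.mul_apply, Equiv.swap_apply_left] at this
  -- a y = swap x y (a x)
  rw [Equiv.swap_apply_of_ne_of_ne hx (Ne.symm hy2)] at this
  exact hy1.symm (a.injective this.symm)

/-- Vertex `i` has at least two edges in the transposition graph of `S`. -/
def HasTwo (S : Set (Perm (Fin n))) (i : Fin n) : Prop :=
  ∃ t1 ∈ S, ∃ t2 ∈ S, t1 ≠ t2 ∧ t1 i ≠ i ∧ t2 i ≠ i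

section Sigma

variable {S : Set (Perm (Fin n))} {σ : Perm (Perm (Fin n))}

lemma sigma_one (hmul : ∀ x y, σ (x * y) = σ x * σ y) : σ 1 = 1 := by
  have h := hmul 1 1
  rw [one_mul] at h
  exact (left_eq_mul.mp h)

lemma sigma_isSwap (hS : ∀ s ∈ S, Perm.IsSwap s) (hσS : ∀ s ∈ S, σ s ∈ S)
    {t : Perm (Fin n)} (ht : t ∈ S) : (σ t).IsSwap := hS _ (hσS _ ht)

lemma common_exists (hS : ∀ s ∈ S, Perm.IsSwap s)
    (hmul : ∀ x y, σ (x * y) = σ x * σ y)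
    {i : Fin n} {t1 t2 : Perm (Fin n)} (h1 : t1 ∈ S) (h2 : t2 ∈ S) (hne : t1 ≠ t2)
    (m1 : t1 i ≠ i) (m2 : t2 i ≠ i) :
    ∃ p, σ t1 p ≠ p ∧ σ t2 p ≠ p := by
  by_contra hc
  push_neg at hc
  have hdisj : (σ t1).Disjoint (σ t2) := fun x => by
    rcases Classical.em (σ t1 x = x) with h | h
    · exact Or.inl h
    · exact Or.inr (hc x h)
  have hcomm : σ t1 * σ t2 = σ t2 * σ t1 := hdisj.commute
  rw [← hmul, ← hmul] at hcomm
  exact swaps_not_commute (hS _ h1) (hS _ h2) hne m1 m2 (σ.injective hcomm)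

lemma moved_all (hS : ∀ s ∈ S, Perm.IsSwap s)
    (hmul : ∀ x y, σ (x * y) = σ x * σ y) (hσS : ∀ s ∈ S, σ s ∈ S)
    {i : Fin n} {t1 t2 : Perm (Fin n)} (h1 : t1 ∈ S) (h2 : t2 ∈ S) (hne : t1 ≠ t2)
    (m1 : t1 i ≠ i) (m2 : t2 i ≠ i) {p : Fin n}
    (hp1 : σ t1 p ≠ p) (hp2 : σ t2 p ≠ p) :
    ∀ t3 ∈ S, t3 i ≠ i → σ t3 p ≠ p := by
  intro t3 h3 m3 hfix
  have hne13 : t3 ≠ t1 := fun h => hp1 (h ▸ hfix)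
  have hne23 : t3 ≠ t2 := fun h => hp2 (h ▸ hfix)
  obtain ⟨q, hq1, hq3⟩ := common_exists hS hmul h1 h3 (Ne.symm hne13) m1 m3
  obtain ⟨r, hr2, hr3⟩ := common_exists hS hmul h2 h3 (Ne.symm hne23) m2 m3
  have hqp : q ≠ p := fun h => hq3 (h ▸ hfix)
  have hrp : r ≠ p := fun h => hr3 (h ▸ hfix)
  have e1 : σ t1 = Equiv.swap p q :=
    eq_swap_of_two_moves (sigma_isSwap hS hσS h1) hp1 hq1 (Ne.symm hqp)
  have e2 : σ t2 = Equiv.swap p r :=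
    eq_swap_of_two_moves (sigma_isSwap hS hσS h2) hp2 hr2 (Ne.symm hrp)
  have hqr : q ≠ r := by
    rintro rfl
    exact hne (σ.injective (e1.trans e2.symm))
  -- t1 * t2 * t1 = swap (t1 i) (t1 (t2 i))
  have hx12 : t1 i ≠ t2 i := by
    intro h
    exact hne ((swap_of_moves (hS _ h1) m1).trans (h ▸ (swap_of_moves (hS _ h2) m2)).symm)
  have ht2i : t1 (t2 i) = t2 i := by
    rw [swap_of_moves (hS _ h1) m1]
    exact Equiv.swap_apply_of_ne_of_ne m2 (Ne.symm hx12)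
  have key1 : t1 * t2 * t1 = Equiv.swap (t1 i) (t2 i) := by
    calc t1 * t2 * t1 = t1 * Equiv.swap i (t2 i) * t1⁻¹ := by
          rw [isSwap_inv (hS _ h1), ← swap_of_moves (hS _ h2) m2]
      _ = Equiv.swap (t1 i) (t1 (t2 i)) := (Equiv.swap_apply_apply t1 i (t2 i)).symm
      _ = Equiv.swap (t1 i) (t2 i) := by rw [ht2i]
  have hrq : Equiv.swap p q r = r :=
    Equiv.swap_apply_of_ne_of_ne hrp hqr.symm
  have key2 : σ (t1 * t2 * t1) = Equiv.swap q r := by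
    rw [hmul, hmul, e1, e2]
    calc Equiv.swap p q * Equiv.swap p r * Equiv.swap p q
        = Equiv.swap p q * Equiv.swap p r * (Equiv.swap p q)⁻¹ := by
          rw [Equiv.swap_inv]
      _ = Equiv.swap (Equiv.swap p q p) (Equiv.swap p q r) :=
          (Equiv.swap_apply_apply _ p r).symm
      _ = Equiv.swap q r := by rw [Equiv.swap_apply_left, hrq]
  have e3 : σ t3 = Equiv.swap q r :=
    eq_swap_of_two_moves (sigma_isSwap hS hσS h3) hq3 hr3 hqr
  have : t3 = t1 * t2 * t1 := σ.injective (e3.trans key2.symm)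
  rw [this, key1] at m3
  exact m3 (Equiv.swap_apply_of_ne_of_ne (Ne.symm m1) (Ne.symm m2))

end Sigma

open scoped Classical in
/-- the common moved point of the images of the edges at a degree-≥2 vertex -/
noncomputable def bTwo (S : Set (Perm (Fin n))) (σ : Perm (Perm (Fin n))) (i : Fin n) :
    Fin n :=
  if h : ∃ p, ∀ t ∈ S, t i ≠ i → σ t p ≠ p then h.choose else i

open scoped Classical in
/-- the vertex map induced by `σ` -/
noncomputable def bFun (S : Set (Perm (Fin n))) (σ : Perm (Perm (Fin n))) (i : Fin n) :
    Fin n :=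
  if HasTwo S i then bTwo S σ i
  else if h : ∃ t ∈ S, t i ≠ i then σ h.choose (bTwo S σ (h.choose i)) else i

section Sigma
variable {S : Set (Perm (Fin n))} {σ : Perm (Perm (Fin n))}
variable (hS : ∀ s ∈ S, Perm.IsSwap s)
variable (hmul : ∀ x y, σ (x * y) = σ x * σ y) (hσS : ∀ s ∈ S, σ s ∈ S)

include hS hmul hσS in
lemma bTwo_spec {i : Fin n} (h2 : HasTwo S i) :
    ∀ t ∈ S, t i ≠ i → σ t (bTwo S σ i) ≠ bTwo S σ i := by
  obtain ⟨t1, h1, t2, ht2, hne, m1, m2⟩ := h2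
  obtain ⟨p, hp1, hp2⟩ := common_exists hS hmul h1 ht2 hne m1 m2
  have hex : ∃ p, ∀ t ∈ S, t i ≠ i → σ t p ≠ p :=
    ⟨p, moved_all hS hmul hσS h1 ht2 hne m1 m2 hp1 hp2⟩
  rw [bTwo, dif_pos hex]
  exact hex.choose_spec

include hS hmul hσS in
lemma bTwo_unique {i : Fin n} (h2 : HasTwo S i) {p : Fin n}
    (hp : ∀ t ∈ S, t i ≠ i → σ t p ≠ p) : p = bTwo S σ i := by
  obtain ⟨t1, h1, t2, ht2, hne, m1, m2⟩ := h2
  have hq := bTwo_spec hS hmul hσS ⟨t1, h1, t2, ht2, hne, m1, m2⟩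
  by_contra hpq
  have e1 : σ t1 = Equiv.swap p (bTwo S σ i) :=
    eq_swap_of_two_moves (sigma_isSwap hS hσS h1) (hp _ h1 m1) (hq _ h1 m1) hpq
  have e2 : σ t2 = Equiv.swap p (bTwo S σ i) :=
    eq_swap_of_two_moves (sigma_isSwap hS hσS ht2) (hp _ ht2 m2) (hq _ ht2 m2) hpq
  exact hne (σ.injective (e1.trans e2.symm))

lemma bFun_of_hasTwo {i : Fin n} (h2 : HasTwo S i) : bFun S σ i = bTwo S σ i := by
  rw [bFun, if_pos h2]
end Sigma

section Gen
variable {S : Set (Perm (Fin n))}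
variable (hn : 3 ≤ n) (hgen : Subgroup.closure S = ⊤)

include hn hgen in
lemma hasOne (i : Fin n) : ∃ t ∈ S, t i ≠ i := by
  by_contra hc
  push_neg at hc
  obtain ⟨k, hk, -⟩ := exists_third hn i i
  have hmem : Equiv.swap i k ∈ Subgroup.closure S := by
    rw [hgen]; exact Subgroup.mem_top _
  have hfix : ∀ x ∈ Subgroup.closure S, x i = i := by
    intro x hx
    induction hx using Subgroup.closure_induction with
    | mem t ht => exact hc t ht
    | one => rfl
    | mul a b _ _ ha hb => rw [Perm.mul_apply, hb, ha]
    | inv a _ ha => exact a.injective (by rw [Equiv.Perm.apply_inv_self, ha])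
  have := hfix _ hmem
  rw [Equiv.swap_apply_left] at this
  exact hk this

include hn hgen in
lemma hdeg1 (hS : ∀ s ∈ S, Perm.IsSwap s) {i : Fin n} (hno : ¬ HasTwo S i)
    {t : Perm (Fin n)} (ht : t ∈ S) (mt : t i ≠ i) : HasTwo S (t i) := by
  set j := t i with hj
  by_contra hnoj
  have htj : t j ≠ j := by
    rw [swap_of_moves (hS _ ht) mt, hj, Equiv.swap_apply_right]
    exact Ne.symm mt
  have htji : t j = i := by
    rw [swap_of_moves (hS _ ht) mt, hj, Equiv.swap_apply_right]
  have hfix : ∀ x ∈ Subgroup.closure S, (x i = i ∧ x j = j) ∨ (x i = j ∧ x j = i) := by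
    intro x hx
    induction hx using Subgroup.closure_induction with
    | mem s hs =>
        rcases Classical.em (s = t) with rfl | hst
        · exact Or.inr ⟨hj.symm, htji⟩
        · left
          constructor
          · by_contra hsi
            exact hno ⟨s, hs, t, ht, hst, hsi, mt⟩
          · by_contra hsj
            exact hnoj ⟨s, hs, t, ht, hst, hsj, htj⟩
    | one => exact Or.inl ⟨rfl, rfl⟩
    | mul a b _ _ ha hb =>
        rcases ha with ⟨ha1, ha2⟩ | ⟨ha1, ha2⟩ <;> rcases hb with ⟨hb1, hb2⟩ | ⟨hb1, hb2⟩ <;>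
          simp [Perm.mul_apply, hb1, hb2, ha1, ha2]
    | inv a _ ha =>
        rcases ha with ⟨ha1, ha2⟩ | ⟨ha1, ha2⟩
        · exact Or.inl ⟨a.injective (by rw [Equiv.Perm.apply_inv_self, ha1]),
            a.injective (by rw [Equiv.Perm.apply_inv_self, ha2])⟩
        · exact Or.inr ⟨a.injective (by rw [Equiv.Perm.apply_inv_self, ha2]),
            a.injective (by rw [Equiv.Perm.apply_inv_self, ha1])⟩
  obtain ⟨k, hki, hkj⟩ := exists_third hn i j
  have hmem : Equiv.swap j k ∈ Subgroup.closure S := by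
    rw [hgen]; exact Subgroup.mem_top _
  rcases hfix _ hmem with ⟨-, h2⟩ | ⟨h1, -⟩
  · rw [Equiv.swap_apply_left] at h2
    exact hkj h2
  · rw [Equiv.swap_apply_of_ne_of_ne (Ne.symm mt) hki.symm] at h1
    exact mt h1.symm
end Gen

section Sigma
variable {S : Set (Perm (Fin n))} {σ : Perm (Perm (Fin n))}
variable (hn : 3 ≤ n) (hgen : Subgroup.closure S = ⊤)
variable (hS : ∀ s ∈ S, Perm.IsSwap s)
variable (hmul : ∀ x y, σ (x * y) = σ x * σ y) (hσS : ∀ s ∈ S, σ s ∈ S)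

include hn hgen hS hmul hσS in
lemma bFun_edge : ∀ t ∈ S, ∀ i : Fin n, t i ≠ i →
    bFun S σ i ≠ bFun S σ (t i) ∧ σ t = Equiv.swap (bFun S σ i) (bFun S σ (t i)) := by
  intro t ht i mt
  set j := t i with hj
  have hswapt : t = Equiv.swap i j := swap_of_moves (hS _ ht) mt
  have hij : i ≠ j := Ne.symm mt
  have htj : t j ≠ j := by rw [hswapt, Equiv.swap_apply_right]; exact hij
  have htji : t j = i := by rw [hswapt, Equiv.swap_apply_right]
  by_cases hi : HasTwo S i
  · by_cases hjj : HasTwo S j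
    · -- both vertices have degree ≥ 2
      have hmi := bTwo_spec hS hmul hσS hi t ht mt
      have hmj := bTwo_spec hS hmul hσS hjj t ht htj
      have hne : bTwo S σ i ≠ bTwo S σ j := by
        intro heq
        -- pick an edge t2 ≠ t at i
        obtain ⟨t1', h1', t2', h2', hne', m1', m2'⟩ := id hi
        obtain ⟨t2, h2, hnet2, m2⟩ : ∃ t2, t2 ∈ S ∧ t2 ≠ t ∧ t2 i ≠ i := by
          rcases Classical.em (t1' = t) with rfl | hd
          · exact ⟨t2', h2', Ne.symm hne', m2'⟩
          · exact ⟨t1', h1', hd, m1'⟩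
        obtain ⟨s1', g1', s2', g2', gne', l1', l2'⟩ := id hjj
        obtain ⟨t3, h3, hnet3, m3⟩ : ∃ t3, t3 ∈ S ∧ t3 ≠ t ∧ t3 j ≠ j := by
          rcases Classical.em (s1' = t) with rfl | hd
          · exact ⟨s2', g2', Ne.symm gne', l2'⟩
          · exact ⟨s1', g1', hd, l1'⟩
        have hne23 : t2 ≠ t3 := by
          rintro rfl
          exact hnet2 ((eq_swap_of_two_moves (hS _ h2) m2 m3 hij).trans hswapt.symm)
        have hm2u : σ t2 (bTwo S σ i) ≠ bTwo S σ i := bTwo_spec hS hmul hσS hi t2 h2 m2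
        have hm3u : σ t3 (bTwo S σ i) ≠ bTwo S σ i := by
          rw [heq]; exact bTwo_spec hS hmul hσS hjj t3 h3 m3
        have hσne : σ t2 ≠ σ t3 := fun h => hne23 (σ.injective h)
        have hncomm : t2 * t3 ≠ t3 * t2 := by
          intro hcomm
          exact swaps_not_commute (sigma_isSwap hS hσS h2) (sigma_isSwap hS hσS h3)
            hσne hm2u hm3u (by rw [← hmul, ← hmul, hcomm])
        obtain ⟨z, hz2, hz3⟩ : ∃ z, t2 z ≠ z ∧ t3 z ≠ z := by
          by_contra hc
          push_neg at hc
          have : t2.Disjoint t3 := fun x => by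
            rcases Classical.em (t2 x = x) with h | h
            · exact Or.inl h
            · exact Or.inr (hc x h)
          exact hncomm this.commute
        have hxy : t2 i = t3 j := by
          rcases moves_or (hS _ h2) m2 hz2 with rfl | rfl
          · rcases moves_or (hS _ h3) m3 hz3 with h | h
            · exact absurd h hij
            · exfalso
              apply hnet3
              rw [eq_swap_of_two_moves (hS _ h3) (h ▸ hz3) m3 hij, ← hswapt]
          · rcases moves_or (hS _ h3) m3 hz3 with h | h
            · exfalso
              apply hnet2
              rw [eq_swap_of_two_moves (hS _ h2) m2 (h ▸ hz2) hij, ← hswapt]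
            · exact h
        have hjt2i : j ≠ t2 i := by
          intro hh
          apply hnet2
          have hmt2j : t2 j ≠ j := by
            rw [hh, isSwap_apply_apply (hS _ h2)]
            exact Ne.symm m2
          exact (eq_swap_of_two_moves (hS _ h2) m2 hmt2j hij).trans hswapt.symm
        have ht2j : t2 j = j := by
          rw [swap_of_moves (hS _ h2) m2]
          exact Equiv.swap_apply_of_ne_of_ne (Ne.symm hij) hjt2i
        have hkey1 : t2 * t * t2 = Equiv.swap (t2 i) j := by
          calc t2 * t * t2 = t2 * Equiv.swap i j * t2⁻¹ := by
                rw [isSwap_inv (hS _ h2), ← hswapt]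
            _ = Equiv.swap (t2 i) (t2 j) := (Equiv.swap_apply_apply t2 i j).symm
            _ = Equiv.swap (t2 i) j := by rw [ht2j]
        have ht3eq : t3 = t2 * t * t2 := by
          rw [hkey1, swap_of_moves (hS _ h3) m3, ← hxy, Equiv.swap_comm]
        set u := bTwo S σ i with hu
        set v := σ t u with hv
        set w := σ t2 u with hw
        have hσswapt : σ t = Equiv.swap u v :=
          swap_of_moves (sigma_isSwap hS hσS ht) hmi
        have hσswap2 : σ t2 = Equiv.swap u w :=
          swap_of_moves (sigma_isSwap hS hσS h2) hm2u
        have hkey2 : σ t3 = Equiv.swap w (σ t2 v) := by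
          rw [ht3eq, hmul, hmul]
          calc σ t2 * σ t * σ t2 = σ t2 * Equiv.swap u v * (σ t2)⁻¹ := by
                rw [isSwap_inv (sigma_isSwap hS hσS h2), hσswapt]
            _ = Equiv.swap (σ t2 u) (σ t2 v) := (Equiv.swap_apply_apply (σ t2) u v).symm
            _ = Equiv.swap w (σ t2 v) := rfl
        have hcase : u = w ∨ u = σ t2 v := by
          by_contra hc
          push_neg at hc
          apply hm3u
          rw [hkey2]
          exact Equiv.swap_apply_of_ne_of_ne hc.1 hc.2
        rcases hcase with hcw | hcv
        · exact hm2u hcw.symm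
        · have hvw : v = w := by
            have : σ t2 u = σ t2 (σ t2 v) := congrArg (σ t2) hcv
            rw [hσswap2, Equiv.swap_apply_self, Equiv.swap_apply_left] at this
            exact this.symm
          apply hnet2
          apply σ.injective
          rw [hσswapt, hσswap2, hvw]
      refine ⟨?_, ?_⟩
      · rw [bFun_of_hasTwo hi, bFun_of_hasTwo hjj]; exact hne
      · rw [bFun_of_hasTwo hi, bFun_of_hasTwo hjj]
        exact eq_swap_of_two_moves (sigma_isSwap hS hσS ht) hmi hmj hne
    · -- j has degree 1
      have hex : ∃ t' ∈ S, t' j ≠ j := ⟨t, ht, htj⟩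
      have hcspec := hex.choose_spec
      have hct : hex.choose = t := by
        by_contra hc
        exact hjj ⟨hex.choose, hcspec.1, t, ht, hc, hcspec.2, htj⟩
      have hbj : bFun S σ j = σ t (bTwo S σ i) := by
        rw [bFun, if_neg hjj, dif_pos hex, hct, htji]
      have hmi := bTwo_spec hS hmul hσS hi t ht mt
      constructor
      · rw [bFun_of_hasTwo hi, hbj]
        exact Ne.symm hmi
      · rw [bFun_of_hasTwo hi, hbj]
        exact swap_of_moves (sigma_isSwap hS hσS ht) hmi
  · -- i has degree 1, j has degree ≥ 2
    have hjj : HasTwo S j := hdeg1 hn hgen hS hi ht mt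
    have hex : ∃ t' ∈ S, t' i ≠ i := ⟨t, ht, mt⟩
    have hcspec := hex.choose_spec
    have hct : hex.choose = t := by
      by_contra hc
      exact hi ⟨hex.choose, hcspec.1, t, ht, hc, hcspec.2, mt⟩
    have hbi : bFun S σ i = σ t (bTwo S σ j) := by
      rw [bFun, if_neg hi, dif_pos hex, hct, ← hj]
    have hmj := bTwo_spec hS hmul hσS hjj t ht htj
    constructor
    · rw [hbi, bFun_of_hasTwo hjj]
      exact hmj
    · rw [hbi, bFun_of_hasTwo hjj]
      rw [Equiv.swap_comm]
      exact swap_of_moves (sigma_isSwap hS hσS ht) hmj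
end Sigma

section Sigma
variable {S : Set (Perm (Fin n))} {σ : Perm (Perm (Fin n))}
variable (hn : 3 ≤ n) (hgen : Subgroup.closure S = ⊤)
variable (hS : ∀ s ∈ S, Perm.IsSwap s)
variable (hmul : ∀ x y, σ (x * y) = σ x * σ y) (hσS : ∀ s ∈ S, σ s ∈ S)
variable (hmul' : ∀ x y, σ⁻¹ (x * y) = σ⁻¹ x * σ⁻¹ y) (hσS' : ∀ s ∈ S, σ⁻¹ s ∈ S)

include hS hmul hσS in
lemma hasTwo_image {i : Fin n} (h2 : HasTwo S i) : HasTwo S (bFun S σ i) := by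
  obtain ⟨t1, h1, t2, ht2, hne, m1, m2⟩ := id h2
  rw [bFun_of_hasTwo h2]
  exact ⟨σ t1, hσS _ h1, σ t2, hσS _ ht2, fun h => hne (σ.injective h),
    bTwo_spec hS hmul hσS h2 t1 h1 m1, bTwo_spec hS hmul hσS h2 t2 ht2 m2⟩

include hS hmul hσS hmul' hσS' in
lemma b_leftinv_hasTwo {i : Fin n} (h2 : HasTwo S i) :
    bFun S σ⁻¹ (bFun S σ i) = i := by
  obtain ⟨t1, h1, t2, ht2, hne, m1, m2⟩ := id h2
  have hb2 : HasTwo S (bFun S σ i) := hasTwo_image hS hmul hσS h2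
  rw [bFun_of_hasTwo h2] at hb2 ⊢
  rw [bFun_of_hasTwo hb2]
  have hspec := bTwo_spec hS hmul' hσS' hb2
  have hp1 : t1 (bTwo S σ⁻¹ (bTwo S σ i)) ≠ bTwo S σ⁻¹ (bTwo S σ i) := by
    have := hspec (σ t1) (hσS _ h1) (bTwo_spec hS hmul hσS h2 t1 h1 m1)
    rwa [Perm.inv_apply_self] at this
  have hp2 : t2 (bTwo S σ⁻¹ (bTwo S σ i)) ≠ bTwo S σ⁻¹ (bTwo S σ i) := by
    have := hspec (σ t2) (hσS _ ht2) (bTwo_spec hS hmul hσS h2 t2 ht2 m2)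
    rwa [Perm.inv_apply_self] at this
  by_contra hpi
  exact hne ((eq_swap_of_two_moves (hS _ h1) hp1 m1 hpi).trans
    (eq_swap_of_two_moves (hS _ ht2) hp2 m2 hpi).symm)

include hn hgen hS hmul hσS hmul' hσS' in
lemma b_leftinv (i : Fin n) : bFun S σ⁻¹ (bFun S σ i) = i := by
  by_cases h2 : HasTwo S i
  · exact b_leftinv_hasTwo hS hmul hσS hmul' hσS' h2
  · obtain ⟨t, ht, mt⟩ := hasOne hn hgen i
    have hjj : HasTwo S (t i) := hdeg1 hn hgen hS h2 ht mt
    obtain ⟨hne, hE⟩ := bFun_edge hn hgen hS hmul hσS t ht i mt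
    have hσtS : σ t ∈ S := hσS _ ht
    have hmovesBi : σ t (bFun S σ i) = bFun S σ (t i) := by
      rw [hE, Equiv.swap_apply_left]
    have hmoves : σ t (bFun S σ i) ≠ bFun S σ i := by rw [hmovesBi]; exact Ne.symm hne
    have htji : t (t i) = i := by
      rw [swap_of_moves (hS _ ht) mt]
      simp
    by_cases hb : HasTwo S (bFun S σ i)
    · rw [bFun_of_hasTwo hb]
      have hspec := bTwo_spec hS hmul' hσS' hb
      set p := bTwo S σ⁻¹ (bFun S σ i) with hp
      have htp : t p ≠ p := by
        have := hspec (σ t) hσtS hmoves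
        rwa [Perm.inv_apply_self] at this
      rcases moves_or (hS _ ht) mt htp with hpi | hpj
      · exact hpi
      · exfalso
        -- p = t i ; find a second edge at bFun S σ i
        obtain ⟨s1, g1, s2, g2, gne, l1, l2⟩ := id hb
        obtain ⟨s', hs', hsne, ms'⟩ :
            ∃ s', s' ∈ S ∧ s' ≠ σ t ∧ s' (bFun S σ i) ≠ bFun S σ i := by
          rcases Classical.em (s1 = σ t) with rfl | hd
          · exact ⟨s2, g2, Ne.symm gne, l2⟩
          · exact ⟨s1, g1, hd, l1⟩
        have hσ's : σ⁻¹ s' ∈ S := hσS' _ hs'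
        have hms'j : (σ⁻¹ s') (t i) ≠ t i := by
          rw [← hpj]
          exact hspec s' hs' ms'
        have : s' ((bFun S σ (t i))) ≠ bFun S σ (t i) := by
          have h3 := bTwo_spec hS hmul hσS hjj (σ⁻¹ s') hσ's hms'j
          rw [Perm.apply_inv_self] at h3
          rwa [bFun_of_hasTwo hjj]
        exact hsne (eq_swap_of_two_moves (hS _ hs') ms' this hne |>.trans hE.symm)
    · have hex : ∃ s ∈ S, s (bFun S σ i) ≠ bFun S σ i := ⟨σ t, hσtS, hmoves⟩
      have hcspec := hex.choose_spec
      have hct : hex.choose = σ t := by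
        by_contra hc
        exact hb ⟨hex.choose, hcspec.1, σ t, hσtS, hc, hcspec.2, hmoves⟩
      have hunf : bFun S σ⁻¹ (bFun S σ i)
          = σ⁻¹ hex.choose (bTwo S σ⁻¹ (hex.choose (bFun S σ i))) := by
        rw [bFun, if_neg hb, dif_pos hex]
      rw [hunf, hct, hmovesBi, Perm.inv_apply_self]
      have : bTwo S σ⁻¹ (bFun S σ (t i)) = t i := by
        have hb2 : HasTwo S (bFun S σ (t i)) := hasTwo_image hS hmul hσS hjj
        have := b_leftinv_hasTwo hS hmul hσS hmul' hσS' hjj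
        rwa [bFun_of_hasTwo hb2] at this
      rw [this, htji]
end Sigma

lemma key {S : Set (Perm (Fin n))} (hn : 3 ≤ n)
    (hS : ∀ s ∈ S, Perm.IsSwap s) (hgen : Subgroup.closure S = ⊤)
    (σ : Perm (Perm (Fin n)))
    (hmul : ∀ x y, σ (x * y) = σ x * σ y)
    (hσS : ∀ s ∈ S, σ s ∈ S) (hσS' : ∀ s ∈ S, σ⁻¹ s ∈ S) :
    ∃ b ∈ graphAut (TransGraph n S), ∀ x, σ x = b * x * b⁻¹ := by
  have hmul' : ∀ x y, σ⁻¹ (x * y) = σ⁻¹ x * σ⁻¹ y := by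
    intro x y
    apply σ.injective
    rw [Perm.apply_inv_self, hmul, Perm.apply_inv_self, Perm.apply_inv_self]
  have hmul'' : ∀ x y, (σ⁻¹)⁻¹ (x * y) = (σ⁻¹)⁻¹ x * (σ⁻¹)⁻¹ y := by
    rw [inv_inv]; exact hmul
  have hσS'' : ∀ s ∈ S, (σ⁻¹)⁻¹ s ∈ S := by rw [inv_inv]; exact hσS
  have hLI : ∀ i, bFun S σ⁻¹ (bFun S σ i) = i :=
    b_leftinv hn hgen hS hmul hσS hmul' hσS'
  have hRI : ∀ i, bFun S σ (bFun S σ⁻¹ i) = i := by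
    have := b_leftinv hn hgen hS hmul' hσS' hmul'' hσS''
    rwa [inv_inv] at this
  let bE : Perm (Fin n) :=
    ⟨bFun S σ, bFun S σ⁻¹, hLI, hRI⟩
  have hbco : ∀ i, bE i = bFun S σ i := fun _ => rfl
  have hbinv : ∀ i, bE⁻¹ i = bFun S σ⁻¹ i := fun _ => rfl
  have hbaut : bE ∈ graphAut (TransGraph n S) := by
    intro x y
    simp only [TransGraph, SimpleGraph.fromRel_adj, hbco]
    constructor
    · rintro ⟨hne', hmem⟩
      have hsS : Equiv.swap (bFun S σ x) (bFun S σ y) ∈ S := by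
        rcases hmem with h | h
        · exact h
        · rwa [Equiv.swap_comm]
      have hmoves : Equiv.swap (bFun S σ x) (bFun S σ y) (bFun S σ x) ≠ bFun S σ x := by
        rw [Equiv.swap_apply_left]; exact Ne.symm hne'
      obtain ⟨hne2, hE⟩ := bFun_edge hn hgen hS hmul' hσS' _ hsS (bFun S σ x) hmoves
      rw [Equiv.swap_apply_left] at hne2 hE
      rw [hLI, hLI] at hne2 hE
      refine ⟨?_, Or.inl ?_⟩
      · intro h; exact hne2 (by rw [h])
      · rw [← hE]; exact hσS' _ hsS
    · rintro ⟨hne', hmem⟩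
      have hsS : Equiv.swap x y ∈ S := by
        rcases hmem with h | h
        · exact h
        · rwa [Equiv.swap_comm]
      have hmoves : Equiv.swap x y x ≠ x := by
        rw [Equiv.swap_apply_left]; exact Ne.symm hne'
      obtain ⟨hne2, hE⟩ := bFun_edge hn hgen hS hmul hσS _ hsS x hmoves
      rw [Equiv.swap_apply_left] at hne2 hE
      refine ⟨hne2, Or.inl ?_⟩
      rw [← hE]; exact hσS _ hsS
  refine ⟨bE, hbaut, ?_⟩
  have hmain : ∀ x ∈ Subgroup.closure S, σ x = bE * x * bE⁻¹ := by
    intro x hx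
    induction hx using Subgroup.closure_induction with
    | mem s hs =>
        obtain ⟨u, v, huv, rfl⟩ := hS s hs
        have hmoveu : Equiv.swap u v u ≠ u := by
          rw [Equiv.swap_apply_left]; exact Ne.symm huv
        obtain ⟨-, hE⟩ := bFun_edge hn hgen hS hmul hσS _ hs u hmoveu
        rw [Equiv.swap_apply_left] at hE
        rw [hE]
        have := Equiv.swap_apply_apply bE u v
        rw [hbco, hbco] at this
        exact this
    | one => rw [sigma_one hmul]; group
    | mul a b _ _ ha hb => rw [hmul, ha, hb]; group
    | inv a _ ha =>
        have : σ a⁻¹ = (σ a)⁻¹ := by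
          apply eq_inv_of_mul_eq_one_left
          rw [← hmul, inv_mul_cancel, sigma_one hmul]
        rw [this, ha]
        group
  intro x
  exact hmain x (by rw [hgen]; exact Subgroup.mem_top x)

/-- Let `n ≥ 3` and let `S` be a set of transpositions generating `Sₙ`
such that `Cay(Sₙ, S)` is normal. Then every automorphism `g` of `Cay(Sₙ, S)` can be
written uniquely as `x ↦ b⁻¹ * x * a` with `a ∈ Sₙ` and `b ∈ Aut(T(S))`; that is,
`Aut(Cay(Sₙ, S))` is the internal product of `R(Sₙ)` and `λ(Aut(T(S)))`, and these
two subgroups intersect trivially. -/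
theorem aut_cayley_unique_factorization (n : ℕ) (hn : 3 ≤ n)
    (S : Set (Equiv.Perm (Fin n)))
    (hS : ∀ s ∈ S, Equiv.Perm.IsSwap s)
    (hgen : Subgroup.closure S = ⊤)
    (hnormal : ((Rrep n).subgroupOf (graphAut (Cay n S))).Normal) :
    (∀ g ∈ graphAut (Cay n S),
      ∃! p : Equiv.Perm (Fin n) × Equiv.Perm (Fin n),
        p.2 ∈ graphAut (TransGraph n S) ∧ ∀ x, g x = p.2⁻¹ * x * p.1) ∧
      Rrep n ⊓ Lrep n S = ⊥ := by
  constructor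
  · intro g hg
    -- right multiplications are automorphisms of the Cayley graph
    have hRaut : ∀ a : Perm (Fin n), Equiv.mulRight a ∈ graphAut (Cay n S) := by
      intro a x y
      have hkey : ∀ u v : Perm (Fin n), (u * a) * (v * a)⁻¹ = u * v⁻¹ := fun u v => by group
      simp only [Cay, SimpleGraph.fromRel_adj, Equiv.coe_mulRight, hkey, ne_eq, mul_left_inj]
    -- the stabilized automorphism
    set σ : Perm (Perm (Fin n)) := Equiv.mulRight (g 1)⁻¹ * g with hσdef
    have hσaut : σ ∈ graphAut (Cay n S) := mul_mem (hRaut _) hg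
    have hσapp : ∀ x, σ x = g x * (g 1)⁻¹ := fun x => rfl
    have hσ1 : σ 1 = 1 := by rw [hσapp, mul_inv_cancel]
    -- multiplicativity from normality
    have hmul : ∀ x y, σ (x * y) = σ x * σ y := by
      have hconj : ∀ a : Perm (Fin n), ∃ c : Perm (Fin n),
          σ * Equiv.mulRight a * σ⁻¹ = Equiv.mulRight c := by
        intro a
        have hmem : (⟨Equiv.mulRight a, hRaut a⟩ : graphAut (Cay n S)) ∈
            (Rrep n).subgroupOf (graphAut (Cay n S)) := by
          rw [Subgroup.mem_subgroupOf]
          exact ⟨a, rfl⟩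
        have := hnormal.conj_mem _ hmem ⟨σ, hσaut⟩
        rw [Subgroup.mem_subgroupOf] at this
        obtain ⟨c, hc⟩ := this
        exact ⟨c, hc⟩
      intro x y
      obtain ⟨c, hc⟩ := hconj y
      have happ : ∀ z, σ (z * y) = σ z * c := by
        intro z
        have := congrArg (fun f : Perm (Perm (Fin n)) => f (σ z)) hc
        simp only [Perm.mul_apply, Equiv.coe_mulRight, Perm.inv_apply_self] at this
        exact this
      have h1 := happ 1
      rw [hσ1, one_mul, one_mul] at h1
      rw [happ x, ← h1]
    -- σ and σ⁻¹ preserve S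
    have hpres : ∀ (τ : Perm (Perm (Fin n))), τ ∈ graphAut (Cay n S) → τ 1 = 1 →
        ∀ s ∈ S, τ s ∈ S := by
      intro τ hτ hτ1 s hs
      have hadj : (Cay n S).Adj 1 s := by
        rw [Cay, SimpleGraph.fromRel_adj]
        exact ⟨Ne.symm (isSwap_ne_one (hS s hs)), Or.inl (by rwa [inv_one, mul_one])⟩
      have := (hτ 1 s).mpr hadj
      rw [hτ1, Cay, SimpleGraph.fromRel_adj] at this
      obtain ⟨-, h | h⟩ := this
      · rwa [inv_one, mul_one] at h
      · rw [one_mul] at h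
        have := isSwap_inv (hS _ h)
        rw [inv_inv] at this
        rw [this]
        exact h
    have hσS : ∀ s ∈ S, σ s ∈ S := hpres σ hσaut hσ1
    have hσ1' : σ⁻¹ 1 = 1 := by
      apply σ.injective
      rw [Perm.apply_inv_self, hσ1]
    have hσS' : ∀ s ∈ S, σ⁻¹ s ∈ S := hpres σ⁻¹ (inv_mem hσaut) hσ1'
    obtain ⟨b, hbaut, hbconj⟩ := key hn hS hgen σ hmul hσS hσS'
    refine ⟨⟨b⁻¹ * g 1, b⁻¹⟩, ⟨inv_mem hbaut, ?_⟩, ?_⟩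
    · intro x
      have h1 : g x = σ x * g 1 := by
        rw [hσapp, mul_assoc, inv_mul_cancel, mul_one]
      rw [h1, hbconj]
      simp only [inv_inv]
      group
    · rintro ⟨a', b'⟩ ⟨hb', heq⟩
      simp only at heq
      have hour : ∀ x, g x = b * x * (b⁻¹ * g 1) := by
        intro x
        have h1 : g x = σ x * g 1 := by
          rw [hσapp, mul_assoc, inv_mul_cancel, mul_one]
        rw [h1, hbconj]
        group
      have hcent : ∀ x : Perm (Fin n),
          (b⁻¹ * b'⁻¹) * x = x * ((b⁻¹ * g 1) * a'⁻¹) := by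
        intro x
        have h := (heq x).symm.trans (hour x)
        calc (b⁻¹ * b'⁻¹) * x = b⁻¹ * (b'⁻¹ * x * a') * a'⁻¹ := by group
          _ = b⁻¹ * (b * x * (b⁻¹ * g 1)) * a'⁻¹ := by rw [h]
          _ = x * ((b⁻¹ * g 1) * a'⁻¹) := by group
      have hc1 : b⁻¹ * b'⁻¹ = (b⁻¹ * g 1) * a'⁻¹ := by
        have := hcent 1
        rwa [mul_one, one_mul] at this
      have hc : b⁻¹ * b'⁻¹ = 1 := by
        apply central_eq_one hn
        intro x
        rw [hcent x, ← hc1]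
      have hbb : b' = b⁻¹ := by
        have hcc := hc
        rw [mul_eq_one_iff_eq_inv, inv_inv] at hcc
        exact hcc.symm
      have haa : a' = b⁻¹ * g 1 := by
        rw [hc1] at hc
        exact (mul_inv_eq_one.mp hc).symm
      simp only [Prod.mk.injEq]
      exact ⟨haa, hbb⟩
  · -- trivial intersection
    rw [eq_bot_iff]
    intro f hf
    rw [Subgroup.mem_inf] at hf
    obtain ⟨⟨a, rfl⟩, ⟨c, hc, hEq⟩⟩ := hf
    have happ : ∀ x : Perm (Fin n), x * a = c⁻¹ * x := by
      intro x
      have := congrArg (fun f : Perm (Perm (Fin n)) => f x) hEq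
      simpa using this
    have h1 : a = c⁻¹ := by
      have := happ 1
      rwa [one_mul, mul_one] at this
    have ha : a = 1 := by
      apply central_eq_one hn
      intro x
      have hh := (happ x).symm
      rwa [← h1] at hh
    rw [Subgroup.mem_bot]
    ext x
    simp [ha]
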